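/- arXiv:2103.11787 — 3 statements merged into one kernel-verified Lean document; each statement's English description precedes it below -/
import Mathlib

section
/- If 0 < ρ < 1 and 0 < v < 1 satisfy ρv/(1-ρ) + v²/(1+v)² ≤ 1/4, then 2ρ + 4v(1-ρ)/(1+v)² ≤ (1-ρ-2ρv)/v. -/
theorem stmt_1 (ρ v : ℝ) (hρ : 0 < ρ) (hρ1 : ρ < 1) (hv : 0 < v) (hv1 : v < 1)
    (h : ρ * v / (1 - ρ) + v ^ 2 / (1 + v) ^ 2 ≤ 1 / 4) :
    2 * ρ + 4 * v * (1 - ρ) / (1 + v) ^ 2 ≤ (1 - ρ - 2 * ρ * v) / v := by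
  have h1ρ : (0:ℝ) < 1 - ρ := by linarith
  have hv2 : (0:ℝ) < (1 + v) ^ 2 := by positivity
  rw [div_add_div _ _ (ne_of_gt h1ρ) (ne_of_gt hv2),
    div_le_div_iff₀ (by positivity) (by norm_num)] at h
  rw [add_div' _ _ _ (ne_of_gt hv2), div_le_div_iff₀ hv2 hv]
  nlinarith [h, mul_pos hv h1ρ]
end

section
/- For any 0 < ρ < 1 and 0 < v < 1 satisfying ρv/(1-ρ) + v²/(1+v)² ≤ 1/4, it holds that v < (1-ρ)/(1+ρ). -/
theorem stmt_9 (ρ v : ℝ) (hρ : 0 < ρ) (hρ1 : ρ < 1) (hv : 0 < v) (hv1 : v < 1)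
    (h : ρ * v / (1 - ρ) + v ^ 2 / (1 + v) ^ 2 ≤ 1 / 4) :
    v < (1 - ρ) / (1 + ρ) := by
  by_contra hc
  push_neg at hc
  rw [div_le_iff₀ (by linarith)] at hc
  have h1 : (0:ℝ) < 1 - ρ := by linarith
  have h2 : (0:ℝ) < (1 + v) ^ 2 := by positivity
  have e1 : ρ * v / (1 - ρ) ≥ ρ / (1 + ρ) := by
    rw [ge_iff_le, div_le_div_iff₀ (by linarith) h1]
    nlinarith
  have e2 : v ^ 2 / (1 + v) ^ 2 ≥ (1 - ρ)^2 / 4 := by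
    rw [ge_iff_le, div_le_div_iff₀ (by norm_num) h2]
    nlinarith [sq_nonneg (v*(1+ρ) - (1-ρ)), sq_nonneg (1-ρ)]
  have e3 : ρ / (1 + ρ) + (1 - ρ)^2 / 4 > 1 / 4 := by
    rw [gt_iff_lt, div_add_div _ _ (by linarith : (1+ρ:ℝ) ≠ 0) (by norm_num : (4:ℝ) ≠ 0), lt_div_iff₀ (by positivity)]
    nlinarith
  linarith
end

section
/- For a nonadaptive input instance, any trajectory x: [0,T] → [-1,1] that is 1-Lipschitz and visits points x_0, x_1, …, x_n at times k_0 < k_1 < ⋯ < k_n can be matched by a piecewise trajectory with speed in {0,1} (alternating waiting and unit-speed motion): there exists a 1-Lipschitz function y: [0,T] → [-1,1] with |y'| ∈ {0,1} almost everywhere, y(k_i) = x_i for all 0 ≤ i ≤ n. -/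
open Finset MeasureTheory Set

private lemma psi_mono {s t c c' : ℝ} (hst : s ≤ t) (hcc : c ≤ c') :
    min s c' - min s c ≤ min t c' - min t c := by
  simp only [min_def]; split_ifs <;> linarith

private lemma psi_bound {s t c : ℝ} (hst : s ≤ t) :
    min t c - min s c ≤ t - s := by
  simp only [min_def]; split_ifs <;> linarith

private lemma aux (n : ℕ) (a X : ℕ → ℝ) (ha : ∀ i, a i ≤ a (i + 1))
    (hd : ∀ i, |X (i + 1) - X i| ≤ a (i + 1) - a i) :
    ∃ y : ℝ → ℝ, LipschitzWith 1 y ∧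
      (∀ j, j ≤ n → y (a j) = X j) ∧
      (∀ t, ∃ p q, p ≤ n ∧ q ≤ n ∧ y t ∈ Set.uIcc (X p) (X q)) ∧
      (∀ᵐ t : ℝ, deriv y t = 0 ∨ |deriv y t| = 1) := by
  have hamono : Monotone a := monotone_nat_of_le_succ ha
  set b : ℕ → ℝ := fun i => a i + |X (i + 1) - X i| with hbdef
  set ε : ℕ → ℝ := fun i => if X (i + 1) - X i < 0 then -1 else 1 with hεdef
  have hab : ∀ i, a i ≤ b i := fun i => le_add_of_nonneg_right (abs_nonneg _)
  have hba : ∀ i, b i ≤ a (i + 1) := by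
    intro i; have := hd i; simp only [hbdef]; linarith
  have hε1 : ∀ i, |ε i| = 1 := by
    intro i; simp only [hεdef]; split_ifs <;> norm_num
  have hεd : ∀ i, ε i * (b i - a i) = X (i + 1) - X i := by
    intro i; simp only [hbdef, hεdef]; split_ifs with h
    · rw [abs_of_neg h]; ring
    · rw [abs_of_nonneg (not_lt.mp h)]; ring
  set y : ℝ → ℝ := fun t =>
    X 0 + ∑ i ∈ Finset.range n, ε i * (min t (b i) - min t (a i)) with hydef
  have hterm0 : ∀ t i, t ≤ a i → ε i * (min t (b i) - min t (a i)) = 0 := by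
    intro t i h
    rw [min_eq_left (h.trans (hab i)), min_eq_left h]; ring
  have htermfull : ∀ t i, a (i + 1) ≤ t → ε i * (min t (b i) - min t (a i)) = X (i + 1) - X i := by
    intro t i h
    rw [min_eq_right ((hba i).trans h), min_eq_right ((hab i).trans ((hba i).trans h))]
    exact hεd i
  have hseg : ∀ j t, j < n → a j ≤ t → t ≤ a (j + 1) →
      y t = X j + ε j * (min t (b j) - a j) := by
    intro j t hj h1 h2
    have hsplit := Finset.sum_range_add_sum_Ico
      (fun i => ε i * (min t (b i) - min t (a i))) (Nat.succ_le_of_lt hj)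
    have hIco : ∑ i ∈ Finset.Ico (j + 1) n, ε i * (min t (b i) - min t (a i)) = 0 := by
      refine Finset.sum_eq_zero fun i hi => hterm0 t i ?_
      exact h2.trans (hamono (Finset.mem_Ico.mp hi).1)
    have hpre : ∑ i ∈ Finset.range j, ε i * (min t (b i) - min t (a i)) = X j - X 0 := by
      rw [Finset.sum_congr rfl fun i hi =>
        htermfull t i ((hamono (Nat.succ_le_of_lt (Finset.mem_range.mp hi))).trans h1)]
      exact Finset.sum_range_sub X j
    simp only [hydef]
    rw [← hsplit, hIco, Finset.sum_range_succ, hpre, min_eq_right h1]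
    ring
  have hfirst : ∀ t, t ≤ a 0 → y t = X 0 := by
    intro t h
    simp only [hydef]
    rw [Finset.sum_eq_zero fun i _ => hterm0 t i (h.trans (hamono (Nat.zero_le i)))]
    ring
  have hlast : ∀ t, a n ≤ t → y t = X n := by
    intro t h
    simp only [hydef]
    rw [Finset.sum_congr rfl fun i hi =>
      htermfull t i ((hamono (Nat.succ_le_of_lt (Finset.mem_range.mp hi))).trans h),
      Finset.sum_range_sub X n]
    ring
  have hval : ∀ j, j ≤ n → y (a j) = X j := by
    intro j hj
    rcases eq_or_lt_of_le hj with h | h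
    · subst h; exact hlast _ le_rfl
    · rw [hseg j (a j) h le_rfl (ha j), min_eq_left (hab j)]; ring
  have hL : ∀ s t : ℝ, s ≤ t → |y t - y s| ≤ t - s := by
    intro s t hst
    have h1 : y t - y s = ∑ i ∈ Finset.range n,
        ε i * ((min t (b i) - min t (a i)) - (min s (b i) - min s (a i))) := by
      simp only [hydef]
      rw [add_sub_add_left_eq_sub, ← Finset.sum_sub_distrib]
      exact Finset.sum_congr rfl fun i _ => by ring
    calc |y t - y s|
        ≤ ∑ i ∈ Finset.range n,
            |ε i * ((min t (b i) - min t (a i)) - (min s (b i) - min s (a i)))| := by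
          rw [h1]; exact Finset.abs_sum_le_sum_abs _ _
      _ = ∑ i ∈ Finset.range n,
            ((min t (b i) - min t (a i)) - (min s (b i) - min s (a i))) := by
          refine Finset.sum_congr rfl fun i _ => ?_
          rw [abs_mul, hε1 i, one_mul, abs_of_nonneg]
          have := psi_mono hst (hab i)
          linarith
      _ ≤ ∑ i ∈ Finset.range n,
            ((min t (a (i + 1)) - min s (a (i + 1))) - (min t (a i) - min s (a i))) := by
          refine Finset.sum_le_sum fun i _ => ?_
          have := psi_mono hst (hba i)
          linarith
      _ = (min t (a n) - min s (a n)) - (min t (a 0) - min s (a 0)) :=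
          Finset.sum_range_sub (fun i => min t (a i) - min s (a i)) n
      _ ≤ t - s := by
          have h2 : min t (a n) - min s (a n) ≤ t - s := psi_bound hst
          have h3 : min s (a 0) ≤ min t (a 0) := min_le_min hst le_rfl
          linarith
  have hlipy : LipschitzWith 1 y := by
    refine LipschitzWith.of_dist_le_mul fun s t => ?_
    rw [Real.dist_eq, Real.dist_eq, NNReal.coe_one, one_mul]
    rcases le_total s t with h | h
    · calc |y s - y t| = |y t - y s| := abs_sub_comm _ _
        _ ≤ t - s := hL s t h
        _ ≤ |s - t| := by rw [abs_sub_comm]; exact le_abs_self _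
    · calc |y s - y t| ≤ s - t := hL t s h
        _ ≤ |s - t| := le_abs_self _
  refine ⟨y, hlipy, hval, ?_, ?_⟩
  · intro t
    rcases le_total t (a 0) with h0 | h0
    · exact ⟨0, 0, Nat.zero_le n, Nat.zero_le n, by
        rw [hfirst t h0]; exact Set.left_mem_uIcc⟩
    rcases le_or_gt (a n) t with hn | hn
    · exact ⟨n, n, le_rfl, le_rfl, by rw [hlast t hn]; exact Set.left_mem_uIcc⟩
    set j := Nat.findGreatest (fun i => a i ≤ t) n with hjdef
    have hj0 : a j ≤ t := Nat.findGreatest_spec (P := fun i => a i ≤ t) (Nat.zero_le n) h0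
    have hjle : j ≤ n := Nat.findGreatest_le n
    have hjn : j < n := by
      rcases eq_or_lt_of_le hjle with h | h
      · exfalso; rw [h] at hj0; linarith
      · exact h
    have ht1 : t < a (j + 1) := by
      have := Nat.findGreatest_is_greatest (lt_add_one j) (Nat.succ_le_of_lt hjn)
      exact lt_of_not_ge (by simpa [hjdef] using this)
    refine ⟨j, j + 1, hjn.le, hjn, ?_⟩
    have hy := hseg j t hjn hj0 ht1.le
    have hc1 : a j ≤ min t (b j) := le_min hj0 (hab j)
    have hc2 : min t (b j) ≤ b j := min_le_right _ _
    have hbj : b j = a j + |X (j + 1) - X j| := by simp only [hbdef]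
    rw [hy, Set.mem_uIcc]
    simp only [hεdef]
    split_ifs with h
    · right
      have habs : |X (j + 1) - X j| = -(X (j + 1) - X j) := abs_of_neg h
      constructor
      · nlinarith
      · nlinarith
    · left
      have habs : |X (j + 1) - X j| = X (j + 1) - X j := abs_of_nonneg (not_lt.mp h)
      constructor
      · nlinarith
      · nlinarith
  · have hfin : (a '' Set.Iic n ∪ b '' Set.Iic n).Finite :=
      ((Set.finite_Iic n).image a).union ((Set.finite_Iic n).image b)
    have hnull : volume (a '' Set.Iic n ∪ b '' Set.Iic n) = 0 :=
      hfin.measure_zero volume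
    have hae : ∀ᵐ t : ℝ, t ∉ (a '' Set.Iic n ∪ b '' Set.Iic n) :=
      measure_eq_zero_iff_ae_notMem.mp hnull
    filter_upwards [hae] with t ht
    have hta : ∀ i, i ≤ n → a i ≠ t := by
      intro i hi he
      exact ht (Or.inl ⟨i, hi, he⟩)
    have htb : ∀ i, i ≤ n → b i ≠ t := by
      intro i hi he
      exact ht (Or.inr ⟨i, hi, he⟩)
    rcases lt_or_ge t (a 0) with h0 | h0
    · left
      have hev : y =ᶠ[nhds t] fun _ => X 0 := by
        filter_upwards [Iio_mem_nhds h0] with r hr using hfirst r hr.le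
      rw [hev.deriv_eq]; exact deriv_const t _
    rcases lt_or_ge (a n) t with hn | hn
    · left
      have hev : y =ᶠ[nhds t] fun _ => X n := by
        filter_upwards [Ioi_mem_nhds hn] with r hr using hlast r hr.le
      rw [hev.deriv_eq]; exact deriv_const t _
    have hn' : t < a n := lt_of_le_of_ne hn (fun he => hta n le_rfl he.symm)
    set j := Nat.findGreatest (fun i => a i ≤ t) n with hjdef
    have hj0 : a j ≤ t := Nat.findGreatest_spec (P := fun i => a i ≤ t) (Nat.zero_le n) h0
    have hjle : j ≤ n := Nat.findGreatest_le n
    have hjn : j < n := by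
      rcases eq_or_lt_of_le hjle with h | h
      · exfalso; rw [h] at hj0; linarith
      · exact h
    have ht1 : t < a (j + 1) := by
      have := Nat.findGreatest_is_greatest (lt_add_one j) (Nat.succ_le_of_lt hjn)
      exact lt_of_not_ge (by simpa [hjdef] using this)
    have hj0' : a j < t := lt_of_le_of_ne hj0 (hta j hjle)
    rcases lt_or_ge t (b j) with hb1 | hb2
    · right
      have hev : y =ᶠ[nhds t] fun r => X j + ε j * (r - a j) := by
        filter_upwards [Ioo_mem_nhds hj0' hb1] with r hr
        rw [hseg j r hjn hr.1.le (hr.2.le.trans (hba j)), min_eq_left hr.2.le]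
      rw [hev.deriv_eq]
      have hdt : HasDerivAt (fun r => X j + ε j * (r - a j)) (ε j) t := by
        simpa using (((hasDerivAt_id t).sub_const (a j)).const_mul (ε j)).const_add (X j)
      rw [hdt.deriv]
      exact hε1 j
    · left
      have hb2' : b j < t := lt_of_le_of_ne hb2 (htb j hjle)
      have hev : y =ᶠ[nhds t] fun _ => X j + ε j * (b j - a j) := by
        filter_upwards [Ioo_mem_nhds hb2' ht1] with r hr
        rw [hseg j r hjn ((hab j).trans hr.1.le) hr.2.le, min_eq_right hr.1.le]
      rw [hev.deriv_eq]; exact deriv_const t _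

theorem stmt_14 (n : ℕ) (k x : Fin (n + 1) → ℝ) (hk : StrictMono k)
    (hx : ∀ i, x i ∈ Set.Icc (-1 : ℝ) 1)
    (hlip : ∀ i j, |x i - x j| ≤ |k i - k j|) :
    ∃ y : ℝ → ℝ, LipschitzWith 1 y ∧ (∀ t, y t ∈ Set.Icc (-1 : ℝ) 1) ∧
      (∀ i, y (k i) = x i) ∧
      (∀ᵐ t : ℝ, deriv y t = 0 ∨ |deriv y t| = 1) := by
  set a : ℕ → ℝ := fun i => k ⟨min i n, Nat.lt_succ_of_le (min_le_right i n)⟩ with hadef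
  set X : ℕ → ℝ := fun i => x ⟨min i n, Nat.lt_succ_of_le (min_le_right i n)⟩ with hXdef
  have ha : ∀ i, a i ≤ a (i + 1) := by
    intro i
    simp only [hadef]
    exact hk.monotone (by simp only [Fin.mk_le_mk]; omega)
  have hd : ∀ i, |X (i + 1) - X i| ≤ a (i + 1) - a i := by
    intro i
    by_cases h : i < n
    · have e1 : min (i + 1) n = i + 1 := by omega
      have e2 : min i n = i := by omega
      simp only [hadef, hXdef, e1, e2]
      have hkk : k ⟨i, by omega⟩ < k ⟨i + 1, by omega⟩ :=
        hk (by simp only [Fin.mk_lt_mk]; omega)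
      calc |x ⟨i + 1, by omega⟩ - x ⟨i, by omega⟩|
          ≤ |k ⟨i + 1, by omega⟩ - k ⟨i, by omega⟩| := hlip _ _
        _ = k ⟨i + 1, by omega⟩ - k ⟨i, by omega⟩ := abs_of_pos (by linarith)
    · have e1 : min (i + 1) n = n := by omega
      have e2 : min i n = n := by omega
      simp [hadef, hXdef, e1, e2]
  obtain ⟨y, h1, h2, h3, h4⟩ := aux n a X ha hd
  have hX : ∀ p, X p ∈ Set.Icc (-1 : ℝ) 1 := fun p => hx _
  refine ⟨y, h1, ?_, ?_, h4⟩
  · intro t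
    obtain ⟨p, q, hp, hq, hm⟩ := h3 t
    obtain ⟨l1, r1⟩ := hX p
    obtain ⟨l2, r2⟩ := hX q
    rcases Set.mem_uIcc.mp hm with ⟨u1, u2⟩ | ⟨u1, u2⟩ <;>
      exact ⟨by linarith, by linarith⟩
  · intro i
    have hki : a i.val = k i := by
      simp only [hadef]
      congr 1
      exact Fin.ext (by simp [Nat.min_eq_left (Nat.lt_succ_iff.mp i.isLt)])
    have hxi : X i.val = x i := by
      simp only [hXdef]
      congr 1
      exact Fin.ext (by simp [Nat.min_eq_left (Nat.lt_succ_iff.mp i.isLt)])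
    rw [← hki, h2 i.val (Nat.lt_succ_iff.mp i.isLt), hxi]
end
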